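/- Define a_i^{(n)} = Π_{j=1}^{i} n/(n+j) for 1 ≤ i ≤ n−1. Then (1/√n)·Σ_{i=1}^{n−1} a_i^{(n)} converges to √(π/2) as n → ∞. -/

import Mathlib

open Filter MeasureTheory Set

namespace Stmt5

noncomputable def a (n i : ℕ) : ℝ := ∏ j ∈ Finset.Icc 1 i, (n : ℝ) / (n + j)

noncomputable def F (n : ℕ) (t : ℝ) : ℝ :=
  ∑ i ∈ Finset.Icc 1 (n - 1),
    Set.indicator (Set.Ioc (((i : ℝ) - 1) / Real.sqrt n) ((i : ℝ) / Real.sqrt n))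
      (fun _ => a n i) t

noncomputable def bound (t : ℝ) : ℝ :=
  Set.indicator (Set.Ioi 0) (fun t => Real.exp (-(4⁻¹ : ℝ) * t ^ 2)) t

noncomputable def f (t : ℝ) : ℝ :=
  Set.indicator (Set.Ioi 0) (fun t => Real.exp (-(2⁻¹ : ℝ) * t ^ 2)) t

lemma a_nonneg (n i : ℕ) : 0 ≤ a n i :=
  Finset.prod_nonneg fun j _ => by positivity

lemma sum_Icc_id (i : ℕ) : ∑ j ∈ Finset.Icc 1 i, (j : ℝ) = i * (i + 1) / 2 := by
  induction i with
  | zero => simp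
  | succ k ih =>
      rw [Finset.sum_Icc_succ_top (Nat.le_add_left 1 k), ih]
      push_cast; ring

lemma a_lower (n : ℕ) (hn : 1 ≤ n) (i : ℕ) :
    Real.exp (-((i : ℝ) * (i + 1) / (2 * n))) ≤ a n i := by
  have hn0 : (0 : ℝ) < n := by exact_mod_cast hn
  have key : (-((i : ℝ) * (i + 1) / (2 * n))) = ∑ j ∈ Finset.Icc 1 i, (-((j : ℝ) / n)) := by
    rw [Finset.sum_neg_distrib, ← Finset.sum_div, sum_Icc_id]
    field_simp
  rw [key, Real.exp_sum]
  apply Finset.prod_le_prod (fun j _ => (Real.exp_pos _).le)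
  intro j _
  have hj : (0 : ℝ) ≤ j := Nat.cast_nonneg j
  have h2 : ((n : ℝ) + j) / n ≤ Real.exp ((j : ℝ) / n) := by
    have h4 : (n + j : ℝ) / n = j / n + 1 := by field_simp; ring
    rw [h4]
    exact Real.add_one_le_exp _
  have h3 : (Real.exp ((j : ℝ) / n))⁻¹ ≤ (((n : ℝ) + j) / n)⁻¹ :=
    inv_anti₀ (by positivity) h2
  rw [Real.exp_neg]
  rwa [inv_div] at h3

lemma a_upper (n : ℕ) (hn : 1 ≤ n) (i : ℕ) :
    a n i ≤ Real.exp (-((i : ℝ) * (i + 1) / (2 * (n + i)))) := by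
  have hn0 : (0 : ℝ) < n := by exact_mod_cast hn
  have step1 : a n i ≤ Real.exp (∑ j ∈ Finset.Icc 1 i, (-((j : ℝ) / (n + j)))) := by
    rw [Real.exp_sum]
    apply Finset.prod_le_prod (fun j _ => by positivity)
    intro j _
    have hj : (0 : ℝ) ≤ j := Nat.cast_nonneg j
    have h1 : (0 : ℝ) < n + j := by positivity
    have h2 : (n : ℝ) / (n + j) = 1 - (j : ℝ) / (n + j) := by field_simp; ring
    have h5 := Real.add_one_le_exp (-((j : ℝ) / (n + j)))
    rw [h2]; linarith
  refine step1.trans (Real.exp_le_exp.2 ?_)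
  have step2 : ∑ j ∈ Finset.Icc 1 i, (-((j : ℝ) / (n + j)))
      ≤ ∑ j ∈ Finset.Icc 1 i, (-((j : ℝ) / (n + i))) := by
    apply Finset.sum_le_sum
    intro j hj
    have hji : (j : ℝ) ≤ i := by exact_mod_cast (Finset.mem_Icc.1 hj).2
    have h1 : (0 : ℝ) < n + j := by positivity
    exact neg_le_neg (div_le_div_of_nonneg_left (Nat.cast_nonneg j) h1 (by linarith))
  refine step2.trans ?_
  have heq : ∑ j ∈ Finset.Icc 1 i, (-((j : ℝ) / (n + i)))
      = -((i : ℝ) * (i + 1) / (2 * (n + i))) := by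
    rw [Finset.sum_neg_distrib, ← Finset.sum_div, sum_Icc_id]
    have h2 : (0 : ℝ) < n + i := by positivity
    field_simp
  rw [heq]

lemma sqrt_natCast_atTop : Tendsto (fun n : ℕ => Real.sqrt n) atTop atTop := by
  apply tendsto_atTop_atTop.2
  intro b
  refine ⟨⌈b ^ 2⌉₊, fun n hn => ?_⟩
  have h1 : (b ^ 2 : ℝ) ≤ n := (Nat.le_ceil _).trans (by exact_mod_cast hn)
  calc b ≤ Real.sqrt (b ^ 2) := by
        rw [Real.sqrt_sq_eq_abs]; exact le_abs_self b
    _ ≤ Real.sqrt n := Real.sqrt_le_sqrt h1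

lemma tendsto_a (t : ℝ) (ht : 0 < t) :
    Tendsto (fun n : ℕ => a n ⌈Real.sqrt n * t⌉₊) atTop (nhds (Real.exp (-(t ^ 2 / 2)))) := by
  set s : ℕ → ℝ := fun n => Real.sqrt n with hs
  set r : ℕ → ℝ := fun n => (⌈s n * t⌉₊ : ℝ) with hr
  have hspos : ∀ n : ℕ, 1 ≤ n → 0 < s n := fun n hn =>
    Real.sqrt_pos.2 (by exact_mod_cast hn)
  have hs2 : ∀ n : ℕ, (1:ℕ) ≤ n → s n * s n = n := fun n hn =>
    Real.mul_self_sqrt (Nat.cast_nonneg n)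
  have hrl : ∀ n : ℕ, s n * t ≤ r n := fun n => Nat.le_ceil _
  have hrnn : ∀ n : ℕ, 0 ≤ s n * t := fun n =>
    mul_nonneg (Real.sqrt_nonneg _) ht.le
  have hru' : ∀ n : ℕ, r n < s n * t + 1 := fun n => Nat.ceil_lt_add_one (hrnn n)
  have hinv : Tendsto (fun n : ℕ => 1 / s n) atTop (nhds 0) := by
    exact sqrt_natCast_atTop.inv_tendsto_atTop.congr (fun n => by simp [hs])
  have hru : Tendsto (fun n => r n / s n) atTop (nhds t) := by
    have hupper : Tendsto (fun n : ℕ => t + 1 / s n) atTop (nhds t) := by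
      simpa using tendsto_const_nhds.add hinv
    apply tendsto_of_tendsto_of_tendsto_of_le_of_le' (tendsto_const_nhds) hupper
    · filter_upwards [eventually_ge_atTop 1] with n hn
      rw [le_div_iff₀ (hspos n hn), mul_comm]
      exact hrl n
    · filter_upwards [eventually_ge_atTop 1] with n hn
      rw [div_le_iff₀ (hspos n hn)]
      have : (t + 1 / s n) * s n = s n * t + 1 := by
        field_simp [(hspos n hn).ne']
      rw [this]
      exact (hru' n).le
  have hrn : Tendsto (fun n : ℕ => r n / n) atTop (nhds 0) := by
    have := hru.mul hinv
    rw [mul_zero] at this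
    apply this.congr'
    filter_upwards [eventually_ge_atTop 1] with n hn
    rw [div_mul_div_comm, mul_one, hs2 n hn]
  have hc : Tendsto (fun n : ℕ => r n * (r n + 1) / (2 * n)) atTop (nhds (t ^ 2 / 2)) := by
    have base := (hru.mul (hru.add hinv)).div_const 2
    rw [add_zero] at base
    have heq : t * t / 2 = t ^ 2 / 2 := by ring
    rw [heq] at base
    apply base.congr'
    filter_upwards [eventually_ge_atTop 1] with n hn
    have hsne : s n ≠ 0 := (hspos n hn).ne'
    field_simp
    rw [← hs2 n hn]; ring
  have hb : Tendsto (fun n : ℕ => r n * (r n + 1) / (2 * (n + r n))) atTop (nhds (t ^ 2 / 2)) := by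
    have hden : Tendsto (fun n : ℕ => 1 + r n / n) atTop (nhds 1) := by
      simpa using tendsto_const_nhds.add hrn
    have base := hc.div hden one_ne_zero
    rw [div_one] at base
    apply base.congr'
    filter_upwards [eventually_ge_atTop 1] with n hn
    have hn0 : (0:ℝ) < n := by exact_mod_cast hn
    have hrnn' : (0:ℝ) ≤ r n := Nat.cast_nonneg _
    have h1 : (0:ℝ) < n + r n := by linarith
    rw [Pi.div_apply]
    field_simp
  have e1 : Tendsto (fun n : ℕ => Real.exp (-(r n * (r n + 1) / (2 * n)))) atTop
      (nhds (Real.exp (-(t ^ 2 / 2)))) := (Real.continuous_exp.tendsto _).comp hc.neg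
  have e2 : Tendsto (fun n : ℕ => Real.exp (-(r n * (r n + 1) / (2 * (n + r n))))) atTop
      (nhds (Real.exp (-(t ^ 2 / 2)))) := (Real.continuous_exp.tendsto _).comp hb.neg
  apply tendsto_of_tendsto_of_tendsto_of_le_of_le' e1 e2
  · filter_upwards [eventually_ge_atTop 1] with n hn
    exact a_lower n hn _
  · filter_upwards [eventually_ge_atTop 1] with n hn
    exact a_upper n hn _

lemma F_nonneg (n : ℕ) (t : ℝ) : 0 ≤ F n t :=
  Finset.sum_nonneg fun i _ => Set.indicator_nonneg (fun _ _ => a_nonneg n i) t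

lemma F_zero_of_nonpos (n : ℕ) {t : ℝ} (ht : t ≤ 0) : F n t = 0 := by
  apply Finset.sum_eq_zero
  intro i hi
  have h1 : (1 : ℝ) ≤ i := by exact_mod_cast (Finset.mem_Icc.1 hi).1
  apply Set.indicator_of_notMem
  intro hmem
  have h2 : (0 : ℝ) ≤ ((i : ℝ) - 1) / Real.sqrt n :=
    div_nonneg (by linarith) (Real.sqrt_nonneg _)
  linarith [hmem.1]

lemma F_apply (n : ℕ) (hn : 1 ≤ n) (t : ℝ) (ht : 0 < t) :
    F n t = if ⌈Real.sqrt n * t⌉₊ ≤ n - 1 then a n ⌈Real.sqrt n * t⌉₊ else 0 := by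
  unfold F
  have hspos : 0 < Real.sqrt n := Real.sqrt_pos.2 (by exact_mod_cast hn)
  set s := Real.sqrt n with hsdef
  set i₀ := ⌈s * t⌉₊ with hi₀def
  have hi₀ : 1 ≤ i₀ := Nat.ceil_pos.2 (mul_pos hspos ht)
  have key : ∀ i : ℕ, 1 ≤ i →
      (t ∈ Set.Ioc (((i : ℝ) - 1) / s) ((i : ℝ) / s) ↔ i₀ = i) := by
    intro i hi
    constructor
    · intro hm
      have h1 : (i : ℝ) - 1 < s * t := by
        have := hm.1
        rw [div_lt_iff₀ hspos] at this
        linarith [mul_comm t s]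
      have h2 : s * t ≤ i := by
        have := hm.2
        rw [le_div_iff₀ hspos] at this
        linarith [mul_comm t s]
      refine (Nat.ceil_eq_iff (by omega)).2 ⟨?_, h2⟩
      rwa [Nat.cast_sub hi, Nat.cast_one]
    · rintro rfl
      constructor
      · rw [div_lt_iff₀ hspos]
        have h3 : (i₀ : ℝ) < s * t + 1 :=
          Nat.ceil_lt_add_one (mul_nonneg hspos.le ht.le)
        have := mul_comm t s
        linarith
      · rw [le_div_iff₀ hspos]
        have h4 : s * t ≤ (i₀ : ℝ) := Nat.le_ceil _
        have := mul_comm t s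
        linarith
  by_cases h : i₀ ≤ n - 1
  · rw [if_pos h]
    rw [Finset.sum_eq_single_of_mem i₀ (Finset.mem_Icc.2 ⟨hi₀, h⟩),
        Set.indicator_of_mem ((key i₀ hi₀).2 rfl)]
    intro i hi hne
    apply Set.indicator_of_notMem
    intro hm
    exact hne ((key i (Finset.mem_Icc.1 hi).1).1 hm).symm
  · rw [if_neg h]
    apply Finset.sum_eq_zero
    intro i hi
    apply Set.indicator_of_notMem
    intro hm
    have h5 := (key i (Finset.mem_Icc.1 hi).1).1 hm
    exact h (h5 ▸ (Finset.mem_Icc.1 hi).2)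

lemma bound_nonneg (t : ℝ) : 0 ≤ bound t :=
  Set.indicator_nonneg (fun _ _ => (Real.exp_pos _).le) t

lemma F_le_bound (n : ℕ) (t : ℝ) : F n t ≤ bound t := by
  rcases le_or_gt t 0 with ht | ht
  · rw [F_zero_of_nonpos n ht]; exact bound_nonneg t
  rcases Nat.lt_or_ge n 1 with hn | hn
  · have hzero : n = 0 := by omega
    subst hzero
    have hF : F 0 t = 0 := by
      apply Finset.sum_eq_zero
      intro i hi
      simp at hi
    rw [hF]; exact bound_nonneg t
  · rw [F_apply n hn t ht]
    split_ifs with h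
    · rw [bound, Set.indicator_of_mem (Set.mem_Ioi.2 ht)]
      refine (a_upper n hn _).trans (Real.exp_le_exp.2 ?_)
      set i₀ := ⌈Real.sqrt n * t⌉₊ with hi₀def
      have hn0 : (0 : ℝ) < n := by exact_mod_cast hn
      have hst : 0 ≤ Real.sqrt n * t :=
        mul_nonneg (Real.sqrt_nonneg _) ht.le
      have h1 : Real.sqrt n * t ≤ (i₀ : ℝ) := Nat.le_ceil _
      have h2 : (n : ℝ) * t ^ 2 ≤ (i₀ : ℝ) * i₀ := by
        have := mul_le_mul h1 h1 hst (Nat.cast_nonneg i₀)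
        have hss : Real.sqrt n * Real.sqrt n = (n : ℝ) :=
          Real.mul_self_sqrt (Nat.cast_nonneg n)
        nlinarith
      have h3 : (i₀ : ℝ) ≤ n := by
        have : i₀ ≤ n := le_trans h (Nat.sub_le n 1)
        exact_mod_cast this
      have h4 : (n : ℝ) * t ^ 2 / (4 * n) ≤ (i₀ : ℝ) * (i₀ + 1) / (2 * (n + i₀)) := by
        apply div_le_div₀ (by positivity) (by nlinarith) (by positivity) (by linarith)
      have h5 : (n : ℝ) * t ^ 2 / (4 * n) = 4⁻¹ * t ^ 2 := by
        field_simp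
      rw [h5] at h4
      linarith
    · exact bound_nonneg t

lemma tendsto_F (t : ℝ) : Tendsto (fun n : ℕ => F n t) atTop (nhds (f t)) := by
  rcases le_or_gt t 0 with ht | ht
  · have hf : f t = 0 := Set.indicator_of_notMem (by simpa using ht) _
    rw [hf]
    exact tendsto_const_nhds.congr fun n => (F_zero_of_nonpos n ht).symm
  · have hf : f t = Real.exp (-(t ^ 2 / 2)) := by
      rw [f, Set.indicator_of_mem (Set.mem_Ioi.2 ht)]; ring_nf
    rw [hf]
    apply (tendsto_a t ht).congr'
    have hev : ∀ᶠ n : ℕ in atTop, max (t + 1) 1 ≤ Real.sqrt n :=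
      sqrt_natCast_atTop.eventually_ge_atTop _
    filter_upwards [hev, eventually_ge_atTop 1] with n hsn hn
    have hs1 : (1 : ℝ) ≤ Real.sqrt n := le_trans (le_max_right _ _) hsn
    have hst : Real.sqrt n * t ≤ (n : ℝ) - 1 := by
      have h1 : t + 1 ≤ Real.sqrt n := le_trans (le_max_left _ _) hsn
      have hss : Real.sqrt n * Real.sqrt n = (n : ℝ) :=
        Real.mul_self_sqrt (Nat.cast_nonneg n)
      nlinarith
    have hceil : ⌈Real.sqrt n * t⌉₊ ≤ n - 1 := by
      rw [Nat.ceil_le, Nat.cast_sub hn, Nat.cast_one]; exact hst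
    rw [F_apply n hn t ht, if_pos hceil]

lemma F_meas (n : ℕ) : AEStronglyMeasurable (F n) volume := by
  apply Measurable.aestronglyMeasurable
  apply Finset.measurable_sum
  intro i _
  exact measurable_const.indicator measurableSet_Ioc

lemma bound_integrable : Integrable bound := by
  apply Integrable.indicator _ measurableSet_Ioi
  exact integrable_exp_neg_mul_sq (by norm_num : (0:ℝ) < 4⁻¹)

lemma integral_F (n : ℕ) (hn : 1 ≤ n) :
    ∫ t, F n t = (1 / Real.sqrt n) * ∑ i ∈ Finset.Icc 1 (n - 1), a n i := by
  have hspos : 0 < Real.sqrt n := Real.sqrt_pos.2 (by exact_mod_cast hn)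
  have hint : ∀ i ∈ Finset.Icc 1 (n - 1),
      Integrable (Set.indicator
        (Set.Ioc (((i : ℝ) - 1) / Real.sqrt n) ((i : ℝ) / Real.sqrt n))
        (fun _ => a n i)) volume := by
    intro i _
    rw [integrable_indicator_iff measurableSet_Ioc]
    exact integrableOn_const measure_Ioc_lt_top.ne
  unfold F
  rw [MeasureTheory.integral_finset_sum _ hint, Finset.mul_sum]
  apply Finset.sum_congr rfl
  intro i _
  rw [integral_indicator_const _ measurableSet_Ioc, measureReal_def, Real.volume_Ioc]
  have h1 : (i : ℝ) / Real.sqrt n - ((i : ℝ) - 1) / Real.sqrt n = 1 / Real.sqrt n := by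
    rw [div_sub_div_same]; norm_num
  rw [h1, ENNReal.toReal_ofReal (by positivity), smul_eq_mul]

lemma integral_f : ∫ t, f t = Real.sqrt (Real.pi / 2) := by
  unfold f
  rw [MeasureTheory.integral_indicator measurableSet_Ioi]
  have h := integral_gaussian_Ioi (2⁻¹ : ℝ)
  rw [h]
  have h2 : Real.pi / 2⁻¹ = 4 * (Real.pi / 2) := by ring
  rw [h2, Real.sqrt_mul (by norm_num : (0:ℝ) ≤ 4),
    show Real.sqrt 4 = 2 by
      rw [show (4:ℝ) = 2 ^ 2 by norm_num, Real.sqrt_sq (by norm_num : (0:ℝ) ≤ 2)]]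
  ring

end Stmt5

open Filter in
/-- With `a_i^{(n)} = Π_{j=1}^{i} n/(n+j)`, the normalized sum
`(1/√n)·Σ_{i=1}^{n-1} a_i^{(n)}` converges to `√(π/2)` as `n → ∞`. -/
theorem stmt_5 :
    Tendsto (fun n : ℕ =>
        (1 / Real.sqrt n) *
          ∑ i ∈ Finset.Icc 1 (n - 1), ∏ j ∈ Finset.Icc 1 i, (n : ℝ) / (n + j))
      atTop (nhds (Real.sqrt (Real.pi / 2))) := by
  have hDCT := MeasureTheory.tendsto_integral_of_dominated_convergence
    (μ := MeasureTheory.volume) Stmt5.bound Stmt5.F_meas Stmt5.bound_integrable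
    (fun n => Filter.Eventually.of_forall (fun t => by
      rw [Real.norm_of_nonneg (Stmt5.F_nonneg n t)]
      exact Stmt5.F_le_bound n t))
    (Filter.Eventually.of_forall Stmt5.tendsto_F)
  rw [Stmt5.integral_f] at hDCT
  apply hDCT.congr'
  filter_upwards [eventually_ge_atTop 1] with n hn
  rw [Stmt5.integral_F n hn]
  rfl
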